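/- arXiv:1006.0159 — 14 statements merged into one kernel-verified Lean document; each statement's English description precedes it below -/
import Mathlib

section
/- Let A and B be integral domains, f : A → B a ring homomorphism, and J a proper ideal of B. If the amalgamation A ⋈^f J is a Bézout ring, then f(A) ∩ J = 0. -/
/-- A commutative ring is an elementary divisor ring if every square matrix is
equivalent to a diagonal matrix via invertible matrices. -/
def IsElementaryDivisorRing (R : Type*) [CommRing R] : Prop :=
  ∀ (n : ℕ) (M : Matrix (Fin n) (Fin n) R),
    ∃ P Q : Matrix (Fin n) (Fin n) R, IsUnit P ∧ IsUnit Q ∧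
      ∃ d : Fin n → R, P * M * Q = Matrix.diagonal d

/-- A commutative ring is Hermite if any pair `a, b` can be written `a = a₁d`,
`b = b₁d` with `Ra₁ + Rb₁ = R`. -/
def IsHermiteRing (R : Type*) [CommRing R] : Prop :=
  ∀ a b : R, ∃ a₁ b₁ d : R, a = a₁ * d ∧ b = b₁ * d ∧ Ideal.span {a₁, b₁} = ⊤

/-- The amalgamation `A ⋈^f J = {(a, f a + j) | a ∈ A, j ∈ J}` as a subring of `A × B`. -/
def amalgamation {A B : Type*} [CommRing A] [CommRing B] (f : A →+* B) (J : Ideal B) :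
    Subring (A × B) where
  carrier := {p | p.2 - f p.1 ∈ J}
  mul_mem' := by
    intro p q hp hq
    have h : (p * q).2 - f (p * q).1
        = p.2 * (q.2 - f q.1) + f q.1 * (p.2 - f p.1) := by
      simp only [Prod.fst_mul, Prod.snd_mul, map_mul]; ring
    show (p * q).2 - f (p * q).1 ∈ J
    rw [h]
    exact J.add_mem (J.mul_mem_left _ hq) (J.mul_mem_left _ hp)
  one_mem' := by simp
  add_mem' := by
    intro p q hp hq
    have h : (p + q).2 - f (p + q).1 = (p.2 - f p.1) + (q.2 - f q.1) := by
      simp only [Prod.fst_add, Prod.snd_add, map_add]; ring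
    show (p + q).2 - f (p + q).1 ∈ J
    rw [h]
    exact J.add_mem hp hq
  zero_mem' := by simp
  neg_mem' := by
    intro p hp
    have h : (-p).2 - f (-p).1 = -(p.2 - f p.1) := by
      simp only [Prod.fst_neg, Prod.snd_neg, map_neg]; ring
    show (-p).2 - f (-p).1 ∈ J
    rw [h]
    exact J.neg_mem hp

/-- The subring `f(A) + J` of `B`. -/
def rangeAddIdeal {A B : Type*} [CommRing A] [CommRing B] (f : A →+* B) (J : Ideal B) :
    Subring B where
  carrier := {b | ∃ a, b - f a ∈ J}
  mul_mem' := by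
    rintro b b' ⟨a, ha⟩ ⟨a', ha'⟩
    refine ⟨a * a', ?_⟩
    have h : b * b' - f (a * a') = b * (b' - f a') + f a' * (b - f a) := by
      simp only [map_mul]; ring
    show b * b' - f (a * a') ∈ J
    rw [h]
    exact J.add_mem (J.mul_mem_left _ ha') (J.mul_mem_left _ ha)
  one_mem' := ⟨1, by simp⟩
  add_mem' := by
    rintro b b' ⟨a, ha⟩ ⟨a', ha'⟩
    refine ⟨a + a', ?_⟩
    have h : b + b' - f (a + a') = (b - f a) + (b' - f a') := by
      simp only [map_add]; ring
    show b + b' - f (a + a') ∈ J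
    rw [h]
    exact J.add_mem ha ha'
  zero_mem' := ⟨0, by simp⟩
  neg_mem' := by
    rintro b ⟨a, ha⟩
    refine ⟨-a, ?_⟩
    have h : -b - f (-a) = -(b - f a) := by simp only [map_neg]; ring
    show -b - f (-a) ∈ J
    rw [h]
    exact J.neg_mem ha

theorem stmt0 {A B : Type*} [CommRing A] [IsDomain A] [CommRing B] [IsDomain B]
    (f : A →+* B) (J : Ideal B) (hJ : J ≠ ⊤)
    (h : IsBezout (amalgamation f J)) :
    ∀ a : A, f a ∈ J → f a = 0 := by
  intro a hfa
  by_contra hne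
  set R := amalgamation f J with hR
  have hx : ((a, 0) : A × B) ∈ R := by
    show (0 : B) - f a ∈ J
    simpa using J.neg_mem hfa
  have hy : ((0, f a) : A × B) ∈ R := by
    show f a - f 0 ∈ J
    simpa using hfa
  set x : R := ⟨(a, 0), hx⟩ with hxdef
  set y : R := ⟨(0, f a), hy⟩ with hydef
  obtain ⟨d, hd⟩ : (Ideal.span ({x, y} : Set R)).IsPrincipal :=
    IsBezout.iff_span_pair_isPrincipal.mp h x y
  have hxmem : x ∈ Ideal.span ({d} : Set R) := hd.le (Ideal.subset_span (by simp))
  have hymem : y ∈ Ideal.span ({d} : Set R) := hd.le (Ideal.subset_span (by simp))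
  have hdmem : d ∈ Ideal.span ({x, y} : Set R) := hd.ge (Ideal.subset_span (by simp))
  obtain ⟨u, hu⟩ := Ideal.mem_span_singleton.mp hxmem
  obtain ⟨v, hv⟩ := Ideal.mem_span_singleton.mp hymem
  obtain ⟨s, t, hst⟩ := Ideal.mem_span_pair.mp hdmem
  -- component equations
  have hu1 : a = d.1.1 * u.1.1 := congrArg (fun z : R => z.1.1) hu
  have hu2 : (0 : B) = d.1.2 * u.1.2 := congrArg (fun z : R => z.1.2) hu
  have hv2 : f a = d.1.2 * v.1.2 := (congrArg (fun z : R => z.1.2) hv)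
  have hs1 : s.1.1 * a + t.1.1 * 0 = d.1.1 := congrArg (fun z : R => z.1.1) hst
  have hb0 : d.1.2 ≠ 0 := by
    intro h0
    apply hne
    rw [hv2, h0, zero_mul]
  have hu2' : u.1.2 = 0 := by
    rcases mul_eq_zero.mp hu2.symm with h0 | h0
    · exact absurd h0 hb0
    · exact h0
  have hfu : f u.1.1 ∈ J := by
    have h1 : f u.1.1 - u.1.2 ∈ J := by simpa [neg_sub] using J.neg_mem u.2
    simpa [hu2'] using h1
  have ha0 : a ≠ 0 := fun h0 => hne (by rw [h0, map_zero])
  have hunit : s.1.1 * u.1.1 = 1 := by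
    have key : a = a * (s.1.1 * u.1.1) := by
      calc a = d.1.1 * u.1.1 := hu1
        _ = (s.1.1 * a + t.1.1 * 0) * u.1.1 := by rw [hs1]
        _ = a * (s.1.1 * u.1.1) := by ring
    exact mul_left_cancel₀ ha0 (by rw [mul_one, ← key])
  apply hJ
  rw [Ideal.eq_top_iff_one]
  have : f s.1.1 * f u.1.1 ∈ J := J.mul_mem_left _ hfu
  rwa [← map_mul, hunit, map_one] at this
end

section
/- Let A and B be integral domains, f : A → B a non-injective ring homomorphism, and J an ideal of B with J ≠ B. If A ⋈^f J is a Bézout ring, then J = 0. -/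
theorem stmt1 {A B : Type*} [CommRing A] [IsDomain A] [CommRing B] [IsDomain B]
    (f : A →+* B) (hf : ¬ Function.Injective f) (J : Ideal B) (hJ : J ≠ ⊤)
    (h : IsBezout (amalgamation f J)) :
    J = ⊥ := by
  by_contra hJ0
  obtain ⟨x, y, hxy, hne⟩ := Function.not_injective_iff.mp hf
  have ha0 : x - y ≠ 0 := sub_ne_zero.mpr hne
  have hfa : f (x - y) = 0 := by rw [map_sub, hxy, sub_self]
  obtain ⟨j, hjJ, hj0⟩ := Submodule.ne_bot_iff J |>.mp hJ0
  set a := x - y with ha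
  let u : amalgamation f J := ⟨(a, 0), by show (0:B) - f a ∈ J; simp [hfa]⟩
  let v : amalgamation f J := ⟨(0, j), by show j - f 0 ∈ J; simpa using hjJ⟩
  have hfg : (Ideal.span {u, v}).FG :=
    Submodule.fg_span ((Set.finite_singleton v).insert u)
  obtain ⟨d, hd⟩ := (h.isPrincipal_of_FG _ hfg).principal
  have hu : u ∈ Ideal.span ({u, v} : Set (amalgamation f J)) :=
    Ideal.subset_span (by simp)
  have hv : v ∈ Ideal.span ({u, v} : Set (amalgamation f J)) :=
    Ideal.subset_span (by simp)
  rw [hd] at hu hv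
  have hdmem : d ∈ Ideal.span ({u, v} : Set (amalgamation f J)) := by
    rw [hd]; exact Ideal.mem_span_singleton_self d
  obtain ⟨r, hr⟩ := Ideal.mem_span_singleton'.mp hu
  obtain ⟨s, hs⟩ := Ideal.mem_span_singleton'.mp hv
  obtain ⟨p, q, hpq⟩ := Ideal.mem_span_pair.mp hdmem
  -- coordinates
  have hr' : (r : A × B) * (d : A × B) = ((a, 0) : A × B) := by
    have := congrArg (Subtype.val) hr; simpa using this
  have hs' : (s : A × B) * (d : A × B) = ((0, j) : A × B) := by
    have := congrArg (Subtype.val) hs; simpa using this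
  have hpq' : (p : A × B) * ((a, 0) : A × B) + (q : A × B) * ((0, j) : A × B)
      = (d : A × B) := by
    have := congrArg (Subtype.val) hpq; simpa using this
  have hr1 : (r : A × B).1 * (d : A × B).1 = a := congrArg Prod.fst hr'
  have hr2 : (r : A × B).2 * (d : A × B).2 = 0 := congrArg Prod.snd hr'
  have hs2 : (s : A × B).2 * (d : A × B).2 = j := congrArg Prod.snd hs'
  have hp1 : (p : A × B).1 * a + (q : A × B).1 * 0 = (d : A × B).1 :=
    congrArg Prod.fst hpq'
  -- d₂ ≠ 0, so r₂ = 0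
  have hd2 : (d : A × B).2 ≠ 0 := fun h0 => hj0 (by rw [← hs2, h0, mul_zero])
  have hr20 : (r : A × B).2 = 0 := by
    rcases mul_eq_zero.mp hr2 with h0 | h0
    · exact h0
    · exact absurd h0 hd2
  -- r₁ is a unit: a = r₁ * (p₁ * a)
  have key : a * ((r : A × B).1 * (p : A × B).1 - 1) = 0 := by
    have h2 : (r : A × B).1 * ((p : A × B).1 * a + (q : A × B).1 * 0) = a := by
      rw [hp1, hr1]
    linear_combination h2
  have hunit : (r : A × B).1 * (p : A × B).1 = 1 := by
    rcases mul_eq_zero.mp key with h0 | h0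
    · exact absurd h0 ha0
    · exact sub_eq_zero.mp h0
  -- f r₁ ∈ J
  have hrJ : f (r : A × B).1 ∈ J := by
    have hmem : (r : A × B).2 - f (r : A × B).1 ∈ J := r.2
    rw [hr20, zero_sub] at hmem
    simpa using J.neg_mem hmem
  have : (1 : B) ∈ J := by
    have h1 : f (r : A × B).1 * f (p : A × B).1 = 1 := by
      rw [← map_mul, hunit, map_one]
    exact h1 ▸ J.mul_mem_right _ hrJ
  exact hJ ((Ideal.eq_top_iff_one J).mpr this)
end

section
/- Let A and B be commutative rings. The product ring A × B is an elementary divisor ring if and only if both A and B are elementary divisor rings. -/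
section aux

variable {A B : Type*} [CommRing A] [CommRing B]

lemma prod_isUnit_iff {M N : Type*} [Monoid M] [Monoid N] {p : M × N} :
    IsUnit p ↔ IsUnit p.1 ∧ IsUnit p.2 := by
  constructor
  · intro h
    exact ⟨h.map (MonoidHom.fst M N), h.map (MonoidHom.snd M N)⟩
  · rintro ⟨⟨u, hu⟩, ⟨v, hv⟩⟩
    exact ⟨⟨(u, v), ((↑u⁻¹ : M), (↑v⁻¹ : N)), by ext <;> simp, by ext <;> simp⟩,
      by simp [hu, hv]⟩

/-- The componentwise ring equivalence for matrices over a product ring. -/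
def matProdEquiv (n : ℕ) :
    Matrix (Fin n) (Fin n) (A × B) ≃+*
      Matrix (Fin n) (Fin n) A × Matrix (Fin n) (Fin n) B where
  toFun M := ((RingHom.fst A B).mapMatrix M, (RingHom.snd A B).mapMatrix M)
  invFun X := fun i j => (X.1 i j, X.2 i j)
  left_inv M := by ext i j <;> rfl
  right_inv X := by
    refine Prod.ext ?_ ?_ <;> ext i j <;> rfl
  map_mul' M N := Prod.ext
    (map_mul ((RingHom.fst A B).mapMatrix) M N) (map_mul ((RingHom.snd A B).mapMatrix) M N)
  map_add' M N := Prod.ext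
    (map_add ((RingHom.fst A B).mapMatrix) M N) (map_add ((RingHom.snd A B).mapMatrix) M N)

lemma matProdEquiv_symm_diagonal (n : ℕ) (dA : Fin n → A) (dB : Fin n → B) :
    (matProdEquiv n).symm (Matrix.diagonal dA, Matrix.diagonal dB)
      = Matrix.diagonal (fun i => (dA i, dB i)) := by
  have key : ∀ i j : Fin n, (Matrix.diagonal dA i j, Matrix.diagonal dB i j)
      = Matrix.diagonal (fun i => (dA i, dB i)) i j := by
    intro i j
    by_cases h : i = j
    · simp [h]
    · simp [Matrix.diagonal_apply_ne _ h, Prod.ext_iff]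
  refine Matrix.ext fun i j => ?_
  show (Matrix.diagonal dA i j, Matrix.diagonal dB i j) = _
  exact key i j

lemma matProdEquiv_diagonal (n : ℕ) (d : Fin n → A × B) :
    (matProdEquiv n) (Matrix.diagonal d)
      = (Matrix.diagonal (fun i => (d i).1), Matrix.diagonal (fun i => (d i).2)) := by
  have h := matProdEquiv_symm_diagonal (A := A) (B := B) n
    (fun i => (d i).1) (fun i => (d i).2)
  rw [← h, RingEquiv.apply_symm_apply]

end aux

theorem stmt3 (A B : Type*) [CommRing A] [CommRing B] :
    IsElementaryDivisorRing (A × B) ↔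
      IsElementaryDivisorRing A ∧ IsElementaryDivisorRing B := by
  constructor
  · intro h
    constructor
    · intro n M
      obtain ⟨P, Q, hP, hQ, d, hd⟩ :=
        h n ((matProdEquiv n).symm ((M, 0) : Matrix (Fin n) (Fin n) A × Matrix (Fin n) (Fin n) B))
      refine ⟨((matProdEquiv n) P).1, ((matProdEquiv n) Q).1, ?_, ?_,
        fun i => (d i).1, ?_⟩
      · exact ((prod_isUnit_iff.mp (hP.map (matProdEquiv (A := A) (B := B) n))).1)
      · exact ((prod_isUnit_iff.mp (hQ.map (matProdEquiv (A := A) (B := B) n))).1)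
      · have := congrArg (fun X => ((matProdEquiv (A := A) (B := B) n) X).1) hd
        simp only [map_mul, Prod.fst_mul, RingEquiv.apply_symm_apply,
          matProdEquiv_diagonal] at this
        exact this
    · intro n M
      obtain ⟨P, Q, hP, hQ, d, hd⟩ :=
        h n ((matProdEquiv n).symm ((0, M) : Matrix (Fin n) (Fin n) A × Matrix (Fin n) (Fin n) B))
      refine ⟨((matProdEquiv n) P).2, ((matProdEquiv n) Q).2, ?_, ?_,
        fun i => (d i).2, ?_⟩
      · exact ((prod_isUnit_iff.mp (hP.map (matProdEquiv (A := A) (B := B) n))).2)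
      · exact ((prod_isUnit_iff.mp (hQ.map (matProdEquiv (A := A) (B := B) n))).2)
      · have := congrArg (fun X => ((matProdEquiv (A := A) (B := B) n) X).2) hd
        simp only [map_mul, Prod.snd_mul, RingEquiv.apply_symm_apply,
          matProdEquiv_diagonal] at this
        exact this
  · rintro ⟨hA, hB⟩ n M
    obtain ⟨PA, QA, hPA, hQA, dA, hdA⟩ := hA n (((matProdEquiv n) M).1)
    obtain ⟨PB, QB, hPB, hQB, dB, hdB⟩ := hB n (((matProdEquiv n) M).2)
    refine ⟨(matProdEquiv n).symm (PA, PB), (matProdEquiv n).symm (QA, QB), ?_, ?_,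
      fun i => (dA i, dB i), ?_⟩
    · exact (prod_isUnit_iff.mpr ⟨hPA, hPB⟩).map (matProdEquiv n).symm
    · exact (prod_isUnit_iff.mpr ⟨hQA, hQB⟩).map (matProdEquiv n).symm
    · rw [← matProdEquiv_symm_diagonal]
      have : M = (matProdEquiv n).symm ((matProdEquiv n) M) := by
        rw [RingEquiv.symm_apply_apply]
      rw [this, ← map_mul, ← map_mul]
      congr 1
      exact Prod.ext (by simpa using hdA) (by simpa using hdB)
end

section
/- Let f : A → B be a ring homomorphism and J an ideal of B. If the amalgamation A ⋈^f J is an elementary divisor ring, then A is an elementary divisor ring. -/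
theorem stmt4 {A B : Type*} [CommRing A] [CommRing B] (f : A →+* B) (J : Ideal B)
    (h : IsElementaryDivisorRing (amalgamation f J)) :
    IsElementaryDivisorRing A := by
  -- `A` is a retract of the amalgamation
  let g : A →+* amalgamation f J :=
    { toFun := fun a => ⟨(a, f a), by show (a, f a).2 - f (a, f a).1 ∈ J; simp⟩
      map_one' := Subtype.ext (by simp)
      map_mul' := fun a b => Subtype.ext (by simp)
      map_zero' := Subtype.ext (by simp)
      map_add' := fun a b => Subtype.ext (by simp) }
  let π : amalgamation f J →+* A := (RingHom.fst A B).comp (amalgamation f J).subtype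
  have hπg : ∀ a, π (g a) = a := fun a => rfl
  intro n M
  obtain ⟨P, Q, hP, hQ, d, hd⟩ := h n (g.mapMatrix M)
  refine ⟨π.mapMatrix P, π.mapMatrix Q, hP.map π.mapMatrix, hQ.map π.mapMatrix,
    fun i => π (d i), ?_⟩
  have := congrArg π.mapMatrix hd
  simpa [Matrix.map_mul, Matrix.diagonal_map, Matrix.map_map,
    show (fun x => π (g x)) = id from funext hπg,
    show (⇑π ∘ ⇑g) = id from funext hπg] using this
end

section
/- Let f : A → B be a ring homomorphism and J an ideal of B. If A ⋈^f J is an elementary divisor ring, then the subring f(A) + J of B is an elementary divisor ring. -/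
lemma edr_of_surjective {R S : Type*} [CommRing R] [CommRing S] (g : R →+* S)
    (hg : Function.Surjective g) (hR : IsElementaryDivisorRing R) :
    IsElementaryDivisorRing S := by
  intro n M
  choose N hN using fun i j => hg (M i j)
  obtain ⟨P, Q, hP, hQ, d, hd⟩ := hR n (Matrix.of N)
  refine ⟨P.map g, Q.map g, ?_, ?_, fun i => g (d i), ?_⟩
  · exact hP.map (g.mapMatrix (m := Fin n))
  · exact hQ.map (g.mapMatrix (m := Fin n))
  · have : (Matrix.of N).map g = M := by ext i j; simp [hN]
    calc P.map g * M * Q.map g = (P * Matrix.of N * Q).map g := by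
          rw [Matrix.map_mul, Matrix.map_mul, this]
      _ = Matrix.diagonal fun i => g (d i) := by
          rw [hd]; exact Matrix.diagonal_map (map_zero g)

def amalgToRange {A B : Type*} [CommRing A] [CommRing B] (f : A →+* B) (J : Ideal B) :
    amalgamation f J →+* rangeAddIdeal f J where
  toFun p := ⟨(p : A × B).2, (p : A × B).1, p.2⟩
  map_one' := rfl
  map_mul' _ _ := rfl
  map_zero' := rfl
  map_add' _ _ := rfl

theorem stmt5 {A B : Type*} [CommRing A] [CommRing B] (f : A →+* B) (J : Ideal B)
    (h : IsElementaryDivisorRing (amalgamation f J)) :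
    IsElementaryDivisorRing (rangeAddIdeal f J) := by
  apply edr_of_surjective (amalgToRange f J) _ h
  rintro ⟨b, a, ha⟩
  exact ⟨⟨(a, b), ha⟩, rfl⟩
end

section
/- Let f : A → B be a ring homomorphism, J an ideal of B, and M a square matrix with entries in A ⋈^f J. Then M is invertible over A ⋈^f J if and only if M_a is invertible over A and M_b is invertible over B. -/
lemma amalg_isUnit_iff {A B : Type*} [CommRing A] [CommRing B] (f : A →+* B) (J : Ideal B)
    (x : amalgamation f J) :
    IsUnit x ↔ IsUnit (x : A × B).1 ∧ IsUnit (x : A × B).2 := by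
  constructor
  · intro hx
    exact ⟨hx.map ((RingHom.fst A B).comp (amalgamation f J).subtype),
      hx.map ((RingHom.snd A B).comp (amalgamation f J).subtype)⟩
  · rintro ⟨⟨u, hu⟩, ⟨v, hv⟩⟩
    have hx : (x : A × B).2 - f (x : A × B).1 ∈ J := x.2
    have hmem : ((↑u⁻¹ : A), (↑v⁻¹ : B)) ∈ amalgamation f J := by
      show (↑v⁻¹ : B) - f (↑u⁻¹ : A) ∈ J
      have key : (↑v⁻¹ : B) - f (↑u⁻¹ : A) =
          -((↑v⁻¹ : B) * f (↑u⁻¹ : A) * ((x : A × B).2 - f (x : A × B).1)) := by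
        have h1 : (↑v⁻¹ : B) * (x : A × B).2 = 1 := by
          rw [← hv]; exact v.inv_mul
        have h2 : f (↑u⁻¹ : A) * f (x : A × B).1 = 1 := by
          rw [← map_mul, ← hu, u.inv_mul, map_one]
        ring_nf
        calc (↑v⁻¹ : B) - f (↑u⁻¹ : A)
            = (f (↑u⁻¹ : A) * f (x : A × B).1) * ↑v⁻¹
              - ((↑v⁻¹ : B) * (x : A × B).2) * f (↑u⁻¹ : A) := by rw [h1, h2]; ring
          _ = _ := by ring
      rw [key]
      exact J.neg_mem (J.mul_mem_left _ hx)
    refine IsUnit.of_mul_eq_one (a := x) ⟨_, hmem⟩ ?_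
    ext
    · show (x : A × B).1 * (↑u⁻¹ : A) = 1
      rw [← hu]; exact u.mul_inv
    · show (x : A × B).2 * (↑v⁻¹ : B) = 1
      rw [← hv]; exact v.mul_inv

theorem stmt6 {A B : Type*} [CommRing A] [CommRing B] (f : A →+* B) (J : Ideal B)
    {n : ℕ} (M : Matrix (Fin n) (Fin n) (amalgamation f J)) :
    IsUnit M ↔
      IsUnit (M.map (fun x => (x : A × B).1)) ∧
      IsUnit (M.map (fun x => (x : A × B).2)) := by
  have h1 : M.map (fun x => (x : A × B).1)
      = M.map ((RingHom.fst A B).comp (amalgamation f J).subtype) := rfl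
  have h2 : M.map (fun x => (x : A × B).2)
      = M.map ((RingHom.snd A B).comp (amalgamation f J).subtype) := rfl
  rw [Matrix.isUnit_iff_isUnit_det, h1, h2, Matrix.isUnit_iff_isUnit_det,
    Matrix.isUnit_iff_isUnit_det, ← RingHom.mapMatrix_apply, ← RingHom.mapMatrix_apply,
    ← RingHom.map_det, ← RingHom.map_det]
  exact amalg_isUnit_iff f J M.det
end

section
/- Let f : A → B be a ring homomorphism and J an ideal of B. An element (a, f(a)+j) of A ⋈^f J is a unit in A ⋈^f J if and only if it is a unit in A × B, i.e., if and only if a is a unit in A and f(a)+j is a unit in B. -/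
theorem stmt7 {A B : Type*} [CommRing A] [CommRing B] (f : A →+* B) (J : Ideal B)
    (x : amalgamation f J) :
    (IsUnit x ↔ IsUnit (x : A × B)) ∧
    (IsUnit (x : A × B) ↔ IsUnit (x : A × B).1 ∧ IsUnit (x : A × B).2) := by
  constructor
  · constructor
    · exact fun h => h.map (amalgamation f J).subtype
    · rintro ⟨u, hu⟩
      have hmem : (x : A × B).2 - f (x : A × B).1 ∈ J := x.2
      have h1 : (x : A × B).1 * (↑u⁻¹ : A × B).1 = 1 := by
        have h := u.mul_inv; rw [hu] at h; exact congrArg Prod.fst h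
      have h2 : (x : A × B).2 * (↑u⁻¹ : A × B).2 = 1 := by
        have h := u.mul_inv; rw [hu] at h; exact congrArg Prod.snd h
      set a := (x : A × B).1
      set b := (x : A × B).2
      set a' := (↑u⁻¹ : A × B).1
      set b' := (↑u⁻¹ : A × B).2
      have hinv : (a', b') ∈ amalgamation f J := by
        have hfa : f a * f a' = 1 := by rw [← map_mul, h1, map_one]
        have hkey : b' - f a' = -(f a' * b') * (b - f a) := by
          have e : -(f a' * b') * (b - f a) = b' * (f a * f a') - f a' * (b * b') := by ring
          rw [e, hfa, h2]; ring
        show (a', b').2 - f (a', b').1 ∈ J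
        rw [hkey]
        exact J.mul_mem_left _ hmem
      refine IsUnit.of_mul_eq_one (a := x) ⟨(a', b'), hinv⟩ ?_
      ext
      · exact h1
      · exact h2
  · constructor
    · exact fun h => ⟨h.map (MonoidHom.fst A B), h.map (MonoidHom.snd A B)⟩
    · rintro ⟨⟨u, hu⟩, ⟨v, hv⟩⟩
      exact ⟨MulEquiv.prodUnits.symm (u, v), by simp [MulEquiv.prodUnits, hu, hv]⟩
end

section
/- Let A and B be integral domains, f : A → B an injective ring homomorphism, and J a proper ideal of B with f(A) ∩ J = 0. Then the projection p_B : A ⋈^f J → f(A) + J sending (a, f(a)+j) to f(a)+j is a ring isomorphism. -/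
theorem stmt8 {A B : Type*} [CommRing A] [IsDomain A] [CommRing B] [IsDomain B]
    (f : A →+* B) (hf : Function.Injective f) (J : Ideal B) (hJ : J ≠ ⊤)
    (hcap : ∀ a : A, f a ∈ J → f a = 0) :
    ∃ e : amalgamation f J ≃+* rangeAddIdeal f J,
      ∀ x : amalgamation f J, (e x : B) = (x : A × B).2 := by
  let g : amalgamation f J →+* rangeAddIdeal f J :=
    { toFun := fun x => ⟨(x : A × B).2, ⟨(x : A × B).1, x.2⟩⟩
      map_one' := rfl
      map_mul' := fun x y => rfl
      map_zero' := rfl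
      map_add' := fun x y => rfl }
  have hbij : Function.Bijective g := by
    constructor
    · rintro ⟨⟨a, b⟩, hab⟩ ⟨⟨a', b'⟩, hab'⟩ h
      have hb : b = b' := congrArg Subtype.val h
      subst hb
      have : b - f a ∈ J := hab
      have : b - f a' ∈ J := hab'
      have hd : f a - f a' ∈ J := by
        have := J.sub_mem hab' hab
        simpa using this
      have : f (a - a') ∈ J := by simpa [map_sub] using hd
      have h0 : f (a - a') = 0 := hcap _ this
      have : a - a' = 0 := hf (by simpa using h0)
      have : a = a' := by linear_combination this
      simp [this]
    · rintro ⟨b, a, ha⟩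
      exact ⟨⟨(a, b), ha⟩, rfl⟩
  exact ⟨RingEquiv.ofBijective g hbij, fun x => rfl⟩
end

section
/- Let A and B be integral domains, f : A → B an injective ring homomorphism, and J a proper ideal of B. Then A ⋈^f J is an elementary divisor ring if and only if f(A) + J is an elementary divisor ring and f(A) ∩ J = 0. -/
section Aux

lemma EDR.of_ringEquiv {R S : Type*} [CommRing R] [CommRing S] (e : R ≃+* S)
    (h : IsElementaryDivisorRing R) : IsElementaryDivisorRing S := by
  intro n M
  obtain ⟨P, Q, hP, hQ, d, hd⟩ := h n (M.map e.symm)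
  refine ⟨P.map e, Q.map e, hP.map (e : R →+* S).mapMatrix,
    hQ.map (e : R →+* S).mapMatrix, fun i => e (d i), ?_⟩
  have h2 := congrArg ((e : R →+* S).mapMatrix) hd
  simp only [map_mul, RingHom.mapMatrix_apply] at h2
  rw [show (M.map ⇑e.symm).map (e : R →+* S) = M by
    rw [Matrix.map_map]; convert Matrix.map_id M; ext x; simp] at h2
  rw [Matrix.diagonal_map (by simp)] at h2; exact h2

/-- When `f(A) ∩ J = 0`, the amalgamation is isomorphic to `f(A) + J`. -/
noncomputable def amalgEquiv {A B : Type*} [CommRing A] [CommRing B] (f : A →+* B)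
    (J : Ideal B) (hf : Function.Injective f) (key : ∀ a : A, f a ∈ J → f a = 0) :
    amalgamation f J ≃+* rangeAddIdeal f J := by
  refine RingEquiv.ofBijective
    (RingHom.codRestrict ((RingHom.snd A B).comp (Subring.subtype (amalgamation f J)))
      (rangeAddIdeal f J) (fun z => ⟨(z : A × B).1, z.2⟩)) ⟨?_, ?_⟩
  · intro z w hzw
    have h2 : (z : A × B).2 = (w : A × B).2 := congrArg Subtype.val hzw
    have hz := z.2; have hw := w.2
    have hmem : f ((z : A × B).1) - f ((w : A × B).1) ∈ J := by
      have := J.sub_mem hw hz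
      rw [h2] at this
      simpa using this
    rw [← map_sub] at hmem
    have := key _ hmem
    rw [map_sub, sub_eq_zero] at this
    have h1 : (z : A × B).1 = (w : A × B).1 := hf this
    exact Subtype.ext (Prod.ext h1 h2)
  · rintro ⟨b, a, hab⟩
    exact ⟨⟨(a, b), hab⟩, rfl⟩

lemma aux_domain {K : Type*} [CommRing K] [IsDomain K] {u00 u01 u10 u11 d0 d1 p q c : K}
    (hc : c ≠ 0) (h1 : c = u00 * d0 * p + u01 * d1 * q)
    (hz0 : u10 * d0 = 0) (hz1 : u11 * d1 = 0)
    (hdet : IsUnit (u00 * u11 - u01 * u10)) :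
    (d0 ≠ 0 ∧ d1 = 0 ∧ u10 = 0 ∧ IsUnit u00 ∧ IsUnit u11) ∨
    (d1 ≠ 0 ∧ d0 = 0 ∧ u11 = 0 ∧ IsUnit u01 ∧ IsUnit u10) := by
  by_cases h0 : d0 = 0
  · right
    have hd1 : d1 ≠ 0 := by
      rintro rfl; apply hc; rw [h1, h0]; ring
    have hu11 : u11 = 0 := by
      rcases mul_eq_zero.mp hz1 with h | h
      · exact h
      · exact absurd h hd1
    refine ⟨hd1, h0, hu11, ?_, ?_⟩
    · rw [hu11, mul_zero, zero_sub] at hdet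
      exact isUnit_of_mul_isUnit_left ((IsUnit.neg_iff _).mp hdet)
    · rw [hu11, mul_zero, zero_sub] at hdet
      exact isUnit_of_mul_isUnit_right ((IsUnit.neg_iff _).mp hdet)
  · left
    have hu10 : u10 = 0 := by
      rcases mul_eq_zero.mp hz0 with h | h
      · exact h
      · exact absurd h h0
    have hd1 : d1 = 0 := by
      by_contra hd1
      have hu11 : u11 = 0 := by
        rcases mul_eq_zero.mp hz1 with h | h
        · exact h
        · exact absurd h hd1
      rw [hu10, hu11, mul_zero, mul_zero, sub_zero] at hdet
      exact hdet.ne_zero rfl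
    refine ⟨h0, hd1, hu10, ?_, ?_⟩
    · rw [hu10, mul_zero, sub_zero] at hdet
      exact isUnit_of_mul_isUnit_left hdet
    · rw [hu10, mul_zero, sub_zero] at hdet
      exact isUnit_of_mul_isUnit_right hdet

lemma aux_cancel {K : Type*} [CommRing K] [IsDomain K] {u e v : K} (hu : IsUnit u)
    (he : e ≠ 0) (h : u * e * v = 0) : v = 0 := by
  rcases mul_eq_zero.mp h with h' | h'
  · rcases mul_eq_zero.mp h' with h'' | h''
    · exact absurd h'' hu.ne_zero
    · exact absurd h'' he
  · exact h'

end Aux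

set_option synthInstance.maxHeartbeats 1000000 in
set_option maxHeartbeats 2000000 in
lemma key_no_inter {A B : Type*} [CommRing A] [IsDomain A] [CommRing B] [IsDomain B]
    (f : A →+* B) (J : Ideal B) (hJ : J ≠ ⊤)
    (h : IsElementaryDivisorRing (amalgamation f J)) (a : A) (haJ : f a ∈ J) : f a = 0 := by
  by_contra hne
  set R := amalgamation f J with hR
  have ha : a ≠ 0 := by rintro rfl; simp at hne
  have hxmem : ((a, 0) : A × B) ∈ amalgamation f J := by
    show (0 : B) - f a ∈ J
    simpa using J.neg_mem haJ
  have hymem : ((0, f a) : A × B) ∈ amalgamation f J := by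
    show f a - f 0 ∈ J
    simpa using haJ
  set x : R := ⟨(a, 0), hxmem⟩ with hx
  set y : R := ⟨(0, f a), hymem⟩ with hy
  set M : Matrix (Fin 2) (Fin 2) R := ![![x, y], ![0, 0]] with hMdef
  obtain ⟨P, Q, hP, hQ, d, hd⟩ := h 2 M
  obtain ⟨Pu, rfl⟩ := hP
  obtain ⟨Qu, rfl⟩ := hQ
  set U : Matrix (Fin 2) (Fin 2) R := ↑Pu⁻¹ with hU
  set V : Matrix (Fin 2) (Fin 2) R := ↑Qu⁻¹ with hV
  -- M = U * diagonal d * V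
  have hM : M = U * Matrix.diagonal d * V := by
    rw [← hd, hU, hV, mul_assoc (Pu : Matrix (Fin 2) (Fin 2) R) M (Qu : Matrix (Fin 2) (Fin 2) R),
      Units.inv_mul_cancel_left, Units.mul_inv_cancel_right]
  -- row 1 of P⁻¹ * diagonal d vanishes
  have hrow : ∀ j, U 1 j * d j = 0 := by
    intro j
    have hMQ : M * (Qu : Matrix (Fin 2) (Fin 2) R) = U * Matrix.diagonal d := by
      rw [← hd, hU, mul_assoc (Pu : Matrix (Fin 2) (Fin 2) R) M (Qu : Matrix (Fin 2) (Fin 2) R),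
        Units.inv_mul_cancel_left]
    have h0 : (M * (Qu : Matrix (Fin 2) (Fin 2) R)) 1 j = 0 := by
      rw [Matrix.mul_apply, Fin.sum_univ_two]
      simp [hMdef]
    rw [hMQ, Matrix.mul_diagonal] at h0
    exact h0
  have hentry : ∀ i j, M i j = U i 0 * d 0 * V 0 j + U i 1 * d 1 * V 1 j := by
    intro i j
    rw [hM, Matrix.mul_apply, Fin.sum_univ_two, Matrix.mul_diagonal, Matrix.mul_diagonal]
  have eqX : x = U 0 0 * d 0 * V 0 0 + U 0 1 * d 1 * V 1 0 := by
    have := hentry 0 0; simpa [hMdef] using this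
  have eqY : y = U 0 0 * d 0 * V 0 1 + U 0 1 * d 1 * V 1 1 := by
    have := hentry 0 1; simpa [hMdef] using this
  set p1 : R →+* A := (RingHom.fst A B).comp (Subring.subtype (amalgamation f J)) with hp1
  set p2 : R →+* B := (RingHom.snd A B).comp (Subring.subtype (amalgamation f J)) with hp2
  have hp1x : p1 x = a := rfl
  have hp2x : p2 x = 0 := rfl
  have hp1y : p1 y = 0 := rfl
  have hp2y : p2 y = f a := rfl
  -- determinants
  have hdetU : IsUnit (U 0 0 * U 1 1 - U 0 1 * U 1 0) := by
    have := (Matrix.isUnit_iff_isUnit_det (U : Matrix (Fin 2) (Fin 2) R)).mp Pu⁻¹.isUnit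
    rwa [Matrix.det_fin_two] at this
  have hdetV : IsUnit (V 0 0 * V 1 1 - V 0 1 * V 1 0) := by
    have := (Matrix.isUnit_iff_isUnit_det (V : Matrix (Fin 2) (Fin 2) R)).mp Qu⁻¹.isUnit
    rwa [Matrix.det_fin_two] at this
  -- contradiction helper
  have contra : ∀ z : R, p2 z = 0 → IsUnit (p1 z) → False := by
    intro z h2 h1
    have hz : (z : A × B).2 - f ((z : A × B).1) ∈ J := z.2
    have h2' : (z : A × B).2 = 0 := h2
    rw [h2', zero_sub] at hz
    have hmem : f ((z : A × B).1) ∈ J := by simpa using J.neg_mem hz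
    exact hJ (J.eq_top_of_isUnit_mem hmem (h1.map f))
  -- component equations
  have eqXA := congrArg p1 eqX
  have eqXB := congrArg p2 eqX
  have eqYA := congrArg p1 eqY
  have eqYB := congrArg p2 eqY
  rw [hp1x] at eqXA; rw [hp2x] at eqXB; rw [hp1y] at eqYA; rw [hp2y] at eqYB
  simp only [map_add, map_mul] at eqXA eqXB eqYA eqYB
  have hzA0 := congrArg p1 (hrow 0); have hzA1 := congrArg p1 (hrow 1)
  have hzB0 := congrArg p2 (hrow 0); have hzB1 := congrArg p2 (hrow 1)
  simp only [map_mul, map_zero] at hzA0 hzA1 hzB0 hzB1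
  have hdetUA : IsUnit (p1 (U 0 0) * p1 (U 1 1) - p1 (U 0 1) * p1 (U 1 0)) := by
    have := hdetU.map p1; simpa only [map_sub, map_mul] using this
  have hdetUB : IsUnit (p2 (U 0 0) * p2 (U 1 1) - p2 (U 0 1) * p2 (U 1 0)) := by
    have := hdetU.map p2; simpa only [map_sub, map_mul] using this
  have hdetVA : IsUnit (p1 (V 0 0) * p1 (V 1 1) - p1 (V 0 1) * p1 (V 1 0)) := by
    have := hdetV.map p1; simpa only [map_sub, map_mul] using this
  have hdetVB : IsUnit (p2 (V 0 0) * p2 (V 1 1) - p2 (V 0 1) * p2 (V 1 0)) := by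
    have := hdetV.map p2; simpa only [map_sub, map_mul] using this
  have hfa : f a ≠ 0 := hne
  rcases aux_domain ha eqXA hzA0 hzA1 hdetUA with
    ⟨hd0A, hd1A, hu10A, hu00A, hu11A⟩ | ⟨hd1A, hd0A, hu11A, hu01A, hu10A⟩ <;>
  rcases aux_domain hfa eqYB hzB0 hzB1 hdetUB with
    ⟨hd0B, hd1B, hu10B, hu00B, hu11B⟩ | ⟨hd1B, hd0B, hu11B, hu01B, hu10B⟩
  · -- case (i): find V 0 0
    have hV00B : p2 (V 0 0) = 0 := by
      rw [hd1B, mul_zero, zero_mul, add_zero] at eqXB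
      exact aux_cancel hu00B hd0B eqXB.symm
    have hV01A : p1 (V 0 1) = 0 := by
      rw [hd1A, mul_zero, zero_mul, add_zero] at eqYA
      exact aux_cancel hu00A hd0A eqYA.symm
    have hV00A : IsUnit (p1 (V 0 0)) := by
      rw [hV01A, zero_mul, sub_zero] at hdetVA
      exact isUnit_of_mul_isUnit_left hdetVA
    exact contra (V 0 0) hV00B hV00A
  · -- case (ii): U 1 1
    exact contra (U 1 1) hu11B hu11A
  · -- case (iii): U 1 0
    exact contra (U 1 0) hu10B hu10A
  · -- case (iv): V 1 0
    have hV10B : p2 (V 1 0) = 0 := by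
      rw [hd0B, mul_zero, zero_mul, zero_add] at eqXB
      exact aux_cancel hu01B hd1B eqXB.symm
    have hV11A : p1 (V 1 1) = 0 := by
      rw [hd0A, mul_zero, zero_mul, zero_add] at eqYA
      exact aux_cancel hu01A hd1A eqYA.symm
    have hV10A : IsUnit (p1 (V 1 0)) := by
      rw [hV11A, mul_zero, zero_sub] at hdetVA
      exact isUnit_of_mul_isUnit_right ((IsUnit.neg_iff _).mp hdetVA)
    exact contra (V 1 0) hV10B hV10A

theorem stmt9 {A B : Type*} [CommRing A] [IsDomain A] [CommRing B] [IsDomain B]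
    (f : A →+* B) (hf : Function.Injective f) (J : Ideal B) (hJ : J ≠ ⊤) :
    IsElementaryDivisorRing (amalgamation f J) ↔
      IsElementaryDivisorRing (rangeAddIdeal f J) ∧ (∀ a : A, f a ∈ J → f a = 0) := by
  constructor
  · intro h
    have key : ∀ a : A, f a ∈ J → f a = 0 := key_no_inter f J hJ h
    exact ⟨EDR.of_ringEquiv (amalgEquiv f J hf key) h, key⟩
  · rintro ⟨h, key⟩
    exact EDR.of_ringEquiv (amalgEquiv f J hf key).symm h
end

section
/- Let R be an elementary divisor ring and R′ a ring with R ⊆ R′ ⊆ Q(R), where Q(R) is the total ring of quotients of R. Then R′ is an elementary divisor ring. -/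
set_option synthInstance.maxHeartbeats 400000 in
set_option maxHeartbeats 1000000 in
theorem stmt11_aux {R : Type*} [CommRing R]
    (hR : ∀ (n : ℕ) (M : Matrix (Fin n) (Fin n) R),
    ∃ P Q : Matrix (Fin n) (Fin n) R, IsUnit P ∧ IsUnit Q ∧
      ∃ d : Fin n → R, P * M * Q = Matrix.diagonal d)
    (R' : Subring (FractionRing R))
    (h : (algebraMap R (FractionRing R)).range ≤ R') :
    ∀ (n : ℕ) (M : Matrix (Fin n) (Fin n) R'),
    ∃ P Q : Matrix (Fin n) (Fin n) R', IsUnit P ∧ IsUnit Q ∧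
      ∃ d : Fin n → R', P * M * Q = Matrix.diagonal d := by
  intro n M
  set K := FractionRing R
  let f : R →+* K := algebraMap R K
  let ι : R' →+* K := R'.subtype
  obtain ⟨d, hd⟩ := IsLocalization.exist_integer_multiples_of_finite
    (nonZeroDivisors R) (fun p : Fin n × Fin n => ι (M p.1 p.2))
  choose N hN using hd
  have hN' : ∀ i j, f (N (i, j)) = f d * ι (M i j) := by
    intro i j
    have := hN (i, j)
    simpa [Algebra.smul_def] using this
  obtain ⟨P, Q, hP, hQ, dv, hdiag⟩ := hR n (Matrix.of fun i j => N (i, j))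
  let φ : R →+* R' := f.codRestrict R' (fun x => h ⟨x, rfl⟩)
  refine ⟨φ.mapMatrix P, φ.mapMatrix Q, hP.map φ.mapMatrix, hQ.map φ.mapMatrix,
    fun i => (φ.mapMatrix P * M * φ.mapMatrix Q) i i, ?_⟩
  have hu : IsUnit (f d) := IsLocalization.map_units K d
  have matkey : f d • ι.mapMatrix (φ.mapMatrix P * M * φ.mapMatrix Q)
      = f.mapMatrix (P * Matrix.of (fun i j => N (i, j)) * Q) := by
    have h1 : ι.mapMatrix (φ.mapMatrix P) = f.mapMatrix P := by
      ext i j; rfl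
    have h2 : ι.mapMatrix (φ.mapMatrix Q) = f.mapMatrix Q := by
      ext i j; rfl
    have h3 : f d • ι.mapMatrix M = f.mapMatrix (Matrix.of fun i j => N (i, j)) := by
      ext i j
      simp [hN' i j]
    rw [map_mul, map_mul, map_mul, map_mul, h1, h2,
      ← Matrix.smul_mul, ← Matrix.mul_smul, h3]
  rw [hdiag] at matkey
  refine Matrix.ext fun i j => Subtype.ext ?_
  rcases eq_or_ne i j with rfl | hij
  · simp
  · have e := congrFun (congrFun matkey i) j
    simp only [Matrix.smul_apply, RingHom.mapMatrix_apply, Matrix.map_apply,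
      Matrix.diagonal_apply_ne _ hij, map_zero, smul_eq_mul] at e
    have hz : ι ((φ.mapMatrix P * M * φ.mapMatrix Q) i j) = 0 := by
      rcases hu with ⟨u, hu'⟩
      rw [← hu'] at e
      simpa using (Units.mul_right_eq_zero u).mp e
    rw [Matrix.diagonal_apply_ne _ hij]
    exact hz.trans (by simp)

theorem stmt11 {R : Type*} [CommRing R] (hR : IsElementaryDivisorRing R)
    (R' : Subring (FractionRing R))
    (h : (algebraMap R (FractionRing R)).range ≤ R') :
    IsElementaryDivisorRing R' := stmt11_aux hR R' h
end

section
/- Let A be an integral domain with quotient field K and let E be a nonzero A-submodule of K with E·E ⊆ E. Then the amalgamated duplication A ⋈ E is an elementary divisor ring if and only if A is an elementary divisor ring and A ⊆ E. -/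
theorem edr_bezout {R : Type*} [CommRing R] (h : IsElementaryDivisorRing R) (x y : R) :
    ∃ w c d p q : R, x = c * w ∧ y = d * w ∧ w = p * x + q * y := by
  obtain ⟨P, Q, hP, hQ, dv, hd⟩ := h 2 ![![x, y], ![0, 0]]
  obtain ⟨Pi, hPi1, hPi2⟩ := isUnit_iff_exists.mp hP
  obtain ⟨Qi, hQi1, hQi2⟩ := isUnit_iff_exists.mp hQ
  set u : R := x * Q 0 0 + y * Q 1 0 with hu
  set v : R := x * Q 0 1 + y * Q 1 1 with hv
  -- entries of hd
  have key : ∀ i j : Fin 2, P i 0 * (x * Q 0 j + y * Q 1 j) = Matrix.diagonal dv i j := by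
    intro i j
    have h2 := congrFun (congrFun (show P * Matrix.of ![![x, y], ![0, 0]] * Q = Matrix.diagonal dv from hd) i) j
    simp only [Matrix.mul_apply, Fin.sum_univ_two, Matrix.of_apply] at h2
    rw [← h2]
    show P i 0 * (x * Q 0 j + y * Q 1 j) = (P i 0 * x + P i 1 * 0) * Q 0 j + (P i 0 * y + P i 1 * 0) * Q 1 j
    ring
  have hv0 : P 0 0 * v = 0 := by
    have := key 0 1; rw [Matrix.diagonal_apply_ne _ (by decide)] at this; rw [hv]; exact this
  have hu0 : P 1 0 * u = 0 := by
    have := key 1 0; rw [Matrix.diagonal_apply_ne _ (by decide)] at this; rw [hu]; exact this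
  -- det of P is a unit
  have hdet : IsUnit (P 0 0 * P 1 1 - P 0 1 * P 1 0) := by
    have := (Matrix.isUnit_iff_isUnit_det P).mp hP
    rwa [Matrix.det_fin_two] at this
  obtain ⟨t, ht⟩ := isUnit_iff_exists.mp hdet
  have ht1 : t * (P 0 0 * P 1 1 - P 0 1 * P 1 0) = 1 := by
    rw [mul_comm]; exact ht.1
  have heu : (t * P 0 0 * P 1 1) * u = u := by linear_combination u * ht1 + t * P 0 1 * hu0
  have hev : (t * P 0 0 * P 1 1) * v = 0 := by linear_combination t * P 1 1 * hv0
  -- Q * Qi = 1 entries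
  have hQQi : ∀ i j : Fin 2, Q i 0 * Qi 0 j + Q i 1 * Qi 1 j = (1 : Matrix (Fin 2) (Fin 2) R) i j := by
    intro i j
    have := congrFun (congrFun hQi1 i) j
    simpa [Matrix.mul_apply, Fin.sum_univ_two] using this
  have h00 := hQQi 0 0
  have h10 := hQQi 1 0
  have h01 := hQQi 0 1
  have h11 := hQQi 1 1
  rw [Matrix.one_apply_eq] at h00 h11
  rw [Matrix.one_apply_ne (by decide)] at h10
  rw [Matrix.one_apply_ne (by decide)] at h01
  have hx : x = u * Qi 0 0 + v * Qi 1 0 := by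
    rw [hu, hv]; linear_combination (-x) * h00 + (-y) * h10
  have hy : y = u * Qi 0 1 + v * Qi 1 1 := by
    rw [hu, hv]; linear_combination (-x) * h01 + (-y) * h11
  set e : R := t * P 0 0 * P 1 1 with he
  refine ⟨u + v, e * Qi 0 0 + (1 - e) * Qi 1 0, e * Qi 0 1 + (1 - e) * Qi 1 1,
    Q 0 0 + Q 0 1, Q 1 0 + Q 1 1, ?_, ?_, ?_⟩
  · linear_combination hx + (Qi 1 0 - Qi 0 0) * heu - (Qi 0 0 - Qi 1 0) * hev
  · linear_combination hy + (Qi 1 1 - Qi 0 1) * heu - (Qi 0 1 - Qi 1 1) * hev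
  · rw [hu, hv]; ring

section AuxE
variable {A : Type*} [CommRing A] [IsDomain A]

local notation "K" => FractionRing A
local notation "f" => algebraMap A (FractionRing A)

lemma entries_memE (E : Submodule A K) {n : ℕ} (P' Q' : Matrix (Fin n) (Fin n) A)
    (Y : Matrix (Fin n) (Fin n) K) (hY : ∀ i j, Y i j ∈ E) :
    ∀ i j, ((f).mapMatrix P' * Y * (f).mapMatrix Q') i j ∈ E := by
  intro i j
  rw [Matrix.mul_apply]
  refine Submodule.sum_mem E fun k _ => ?_
  rw [Matrix.mul_apply, Finset.sum_mul]
  refine Submodule.sum_mem E fun l _ => ?_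
  have : (f).mapMatrix P' i l * Y l k * (f).mapMatrix Q' k j
      = (P' i l * Q' k j) • Y l k := by
    rw [Algebra.smul_def, map_mul, RingHom.mapMatrix_apply, RingHom.mapMatrix_apply]
    simp [Matrix.map_apply]
    ring
  rw [this]
  exact E.smul_mem _ (hY l k)

lemma diagE (hA : IsElementaryDivisorRing A) (E : Submodule A K) {n : ℕ}
    (Y : Matrix (Fin n) (Fin n) K) (hY : ∀ i j, Y i j ∈ E) :
    ∃ (P' Q' Pi' Qi' : Matrix (Fin n) (Fin n) A) (d : Fin n → K),
      P' * Pi' = 1 ∧ Pi' * P' = 1 ∧ Q' * Qi' = 1 ∧ Qi' * Q' = 1 ∧ (∀ i, d i ∈ E) ∧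
      (f).mapMatrix P' * Y * (f).mapMatrix Q' = Matrix.diagonal d := by
  obtain ⟨b, hb⟩ := IsLocalization.exist_integer_multiples (nonZeroDivisors A)
    Finset.univ (fun p : Fin n × Fin n => Y p.1 p.2)
  choose Y' hY' using fun p : Fin n × Fin n => hb p (Finset.mem_univ p)
  set M' : Matrix (Fin n) (Fin n) A := fun i j => Y' (i, j) with hM'
  obtain ⟨P', Q', hP', hQ', d', hd'⟩ := hA n M'
  obtain ⟨Pi', hPi1, hPi2⟩ := isUnit_iff_exists.mp hP'
  obtain ⟨Qi', hQi1, hQi2⟩ := isUnit_iff_exists.mp hQ'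
  have hfb : (f) (b : A) ≠ 0 :=
    IsFractionRing.to_map_ne_zero_of_mem_nonZeroDivisors b.2
  -- f M' = f b • Y
  have hfM : ((f).mapMatrix M' : Matrix (Fin n) (Fin n) K) = (f) (b : A) • Y := by
    ext i j
    rw [RingHom.mapMatrix_apply, Matrix.map_apply, Matrix.smul_apply, smul_eq_mul,
      ← Algebra.smul_def]
    exact hY' (i, j)
  set Z : Matrix (Fin n) (Fin n) K := (f).mapMatrix P' * Y * (f).mapMatrix Q' with hZ
  have hmain : (f) (b : A) • Z = Matrix.diagonal ((f) ∘ d') := by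
    have h2 := congrArg ((f).mapMatrix) hd'
    rw [map_mul, map_mul, hfM, Matrix.mul_smul, Matrix.smul_mul] at h2
    rw [RingHom.mapMatrix_apply (algebraMap A K) (Matrix.diagonal d'),
      Matrix.diagonal_map (map_zero _)] at h2
    exact h2
  have hdiag : Z = Matrix.diagonal (fun i => Z i i) := by
    ext i j
    by_cases hij : i = j
    · subst hij; rw [Matrix.diagonal_apply_eq]
    · rw [Matrix.diagonal_apply_ne _ hij]
      have h0 : (f) (b : A) * Z i j = 0 := by
        have := congrFun (congrFun hmain i) j
        rw [Matrix.smul_apply, smul_eq_mul] at this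
        rw [this, Matrix.diagonal_apply_ne _ hij]
      exact (mul_eq_zero.mp h0).resolve_left hfb
  exact ⟨P', Q', Pi', Qi', fun i => Z i i, hPi1, hPi2, hQi1, hQi2,
    fun i => entries_memE E P' Q' Y hY i i, hdiag ▸ rfl⟩

end AuxE

section Proj
variable {A B : Type*} [CommRing A] [CommRing B] (D : Subring (A × B))

def projFst : ↥D →+* A := (RingHom.fst A B).comp D.subtype
def projSnd : ↥D →+* B := (RingHom.snd A B).comp D.subtype

lemma matrix_ext_of_proj {n : ℕ} (U V : Matrix (Fin n) (Fin n) ↥D)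
    (h1 : (projFst D).mapMatrix U = (projFst D).mapMatrix V)
    (h2 : (projSnd D).mapMatrix U = (projSnd D).mapMatrix V) : U = V := by
  funext i j
  have e1 : projFst D (U i j) = projFst D (V i j) := congrFun (congrFun h1 i) j
  have e2 : projSnd D (U i j) = projSnd D (V i j) := congrFun (congrFun h2 i) j
  exact Subtype.ext (Prod.ext e1 e2)

end Proj

set_option maxHeartbeats 2000000 in
set_option synthInstance.maxHeartbeats 400000 in
theorem stmt12 {A : Type*} [CommRing A] [IsDomain A]
    (E : Submodule A (FractionRing A)) (hE : E ≠ ⊥)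
    (hE2 : ∀ x ∈ E, ∀ y ∈ E, x * y ∈ E)
    (D : Subring (A × FractionRing A))
    (hD : ∀ p : A × FractionRing A, p ∈ D ↔ p.2 - algebraMap A (FractionRing A) p.1 ∈ E) :
    IsElementaryDivisorRing D ↔
      IsElementaryDivisorRing A ∧ ∀ a : A, algebraMap A (FractionRing A) a ∈ E := by
  set K := FractionRing A
  set f := algebraMap A K with hf
  set π₁ := projFst D
  set π₂ := projSnd D
  constructor
  · intro hDE
    constructor
    · -- A is an EDR via the section a ↦ (a, f a)
      have hmem : ∀ a : A, ((RingHom.id A).prod f) a ∈ D := fun a => (hD _).2 (by simp)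
      set σ : A →+* ↥D := RingHom.codRestrict ((RingHom.id A).prod f) D hmem with hσ
      intro n M
      obtain ⟨P, Q, hP, hQ, d, hd⟩ := hDE n (σ.mapMatrix M)
      refine ⟨π₁.mapMatrix P, π₁.mapMatrix Q, hP.map π₁.mapMatrix, hQ.map π₁.mapMatrix,
        fun i => π₁ (d i), ?_⟩
      have : π₁.mapMatrix (σ.mapMatrix M) = M := by
        ext i j; rfl
      calc π₁.mapMatrix P * M * π₁.mapMatrix Q
          = π₁.mapMatrix (P * σ.mapMatrix M * Q) := by rw [map_mul, map_mul, this]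
        _ = π₁.mapMatrix (Matrix.diagonal d) := by rw [hd]
        _ = Matrix.diagonal (fun i => π₁ (d i)) := by
            rw [RingHom.mapMatrix_apply, Matrix.diagonal_map (map_zero _)]
    · -- A ⊆ E, i.e. f a ∈ E for all a
      obtain ⟨e, heE, hene⟩ := (Submodule.ne_bot_iff E).mp hE
      obtain ⟨⟨s, t⟩, hst⟩ := IsLocalization.surj (nonZeroDivisors A) e
      have hfs : f s ∈ E := by
        have : f s = (t : A) • e := by
          rw [Algebra.smul_def, ← hst]; ring
        rw [this]; exact E.smul_mem _ heE
      have hfsne : f s ≠ 0 := by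
        rw [← hst]
        exact mul_ne_zero hene (IsFractionRing.to_map_ne_zero_of_mem_nonZeroDivisors t.2)
      set x : ↥D := ⟨(s, 0), (hD _).2 (by rw [zero_sub]; exact E.neg_mem hfs)⟩ with hxdef
      set y : ↥D := ⟨(0, f s), (hD _).2 (by simp only [map_zero, sub_zero]; exact hfs)⟩ with hydef
      obtain ⟨w, c, d, p, q, hx, hy, hw⟩ := edr_bezout hDE x y
      have e1 : s = π₁ c * π₁ w := by
        have := congrArg π₁ hx; rwa [map_mul] at this
      have hsne : s ≠ 0 := fun h0 => hfsne (by rw [h0, map_zero])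
      have hw1ne : π₁ w ≠ 0 := fun h0 => hsne (by rw [e1, h0, mul_zero])
      have e2 : (0 : A) = π₁ d * π₁ w := by
        have := congrArg π₁ hy; rwa [map_mul] at this
      have hd1 : π₁ d = 0 := by
        rcases mul_eq_zero.mp e2.symm with h | h
        · exact h
        · exact absurd h hw1ne
      have hd2 : π₂ d ∈ E := by
        have := (hD (d : A × K)).1 d.2
        rwa [show ((d : A × K)).1 = π₁ d from rfl, hd1, map_zero, sub_zero] at this
      have e3 : f s = π₂ d * π₂ w := by
        have := congrArg π₂ hy; rwa [map_mul] at this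
      have px : π₂ x = 0 := rfl
      have py : π₂ y = f s := rfl
      have e4 : π₂ w = π₂ p * 0 + π₂ q * f s := by
        have h6 := congrArg π₂ hw
        rw [map_add, map_mul, map_mul, px, py] at h6; exact h6
      have hdq : π₂ d * π₂ q = 1 := by
        have h5 : (π₂ d * π₂ q) * f s = 1 * f s := by
          linear_combination -e3 - π₂ d * e4
        exact mul_right_cancel₀ hfsne h5
      have hq : π₂ q - f (π₁ q) ∈ E := (hD (q : A × K)).1 q.2
      have h1E : (1 : K) ∈ E := by
        have heq : (1 : K) = π₂ d * (π₂ q - f (π₁ q)) + (π₁ q) • (π₂ d) := by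
          rw [Algebra.smul_def]; linear_combination -hdq
        rw [heq]
        exact E.add_mem (hE2 _ hd2 _ hq) (E.smul_mem _ hd2)
      intro a
      have := E.smul_mem a h1E
      rwa [Algebra.smul_def, mul_one] at this
  · rintro ⟨hA, hAE⟩ n N
    have mkMem : ∀ (a : A) (z : K), z ∈ E → (a, z) ∈ D :=
      fun a z hz => (hD _).2 (E.sub_mem hz (hAE a))
    set N₁ := π₁.mapMatrix N with hN₁
    set N₂ := π₂.mapMatrix N with hN₂d
    have hN₂ : ∀ i j, N₂ i j ∈ E := by
      intro i j
      have h := (hD ((N i j : A × K))).1 (N i j).2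
      have : N₂ i j = (((N i j : A × K)).2 - f ((N i j : A × K)).1) + f ((N i j : A × K)).1 := by
        show π₂ (N i j) = _; ring_nf; rfl
      rw [this]
      exact E.add_mem h (hAE _)
    obtain ⟨P₁, Q₁, hP₁, hQ₁, d₁, hd₁⟩ := hA n N₁
    obtain ⟨R₁, hR₁a, hR₁b⟩ := isUnit_iff_exists.mp hP₁
    obtain ⟨S₁, hS₁a, hS₁b⟩ := isUnit_iff_exists.mp hQ₁
    obtain ⟨P', Q', Pi', Qi', d₂, hPi1, hPi2, hQi1, hQi2, hd₂E, hZ⟩ := diagE hA E N₂ hN₂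
    -- pair up matrices
    have memf : ∀ (X : Matrix (Fin n) (Fin n) A) i j, (f.mapMatrix X) i j ∈ E :=
      fun X i j => hAE (X i j)
    set P : Matrix (Fin n) (Fin n) ↥D :=
      fun i j => ⟨(P₁ i j, f.mapMatrix P' i j), mkMem _ _ (memf P' i j)⟩ with hP
    set Q : Matrix (Fin n) (Fin n) ↥D :=
      fun i j => ⟨(Q₁ i j, f.mapMatrix Q' i j), mkMem _ _ (memf Q' i j)⟩ with hQ
    set Pinv : Matrix (Fin n) (Fin n) ↥D :=
      fun i j => ⟨(R₁ i j, f.mapMatrix Pi' i j), mkMem _ _ (memf Pi' i j)⟩ with hPinv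
    set Qinv : Matrix (Fin n) (Fin n) ↥D :=
      fun i j => ⟨(S₁ i j, f.mapMatrix Qi' i j), mkMem _ _ (memf Qi' i j)⟩ with hQinv
    set dd : Fin n → ↥D := fun i => ⟨(d₁ i, d₂ i), mkMem _ _ (hd₂E i)⟩ with hdd
    have p1P : π₁.mapMatrix P = P₁ := by ext i j; rfl
    have p2P : π₂.mapMatrix P = f.mapMatrix P' := by ext i j; rfl
    have p1Q : π₁.mapMatrix Q = Q₁ := by ext i j; rfl
    have p2Q : π₂.mapMatrix Q = f.mapMatrix Q' := by ext i j; rfl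
    have p1Pi : π₁.mapMatrix Pinv = R₁ := by ext i j; rfl
    have p2Pi : π₂.mapMatrix Pinv = f.mapMatrix Pi' := by ext i j; rfl
    have p1Qi : π₁.mapMatrix Qinv = S₁ := by ext i j; rfl
    have p2Qi : π₂.mapMatrix Qinv = f.mapMatrix Qi' := by ext i j; rfl
    refine ⟨P, Q, isUnit_iff_exists.mpr ⟨Pinv, ?_, ?_⟩,
      isUnit_iff_exists.mpr ⟨Qinv, ?_, ?_⟩, dd, ?_⟩
    · exact matrix_ext_of_proj D _ _
        (by rw [map_mul, map_one, p1P, p1Pi, hR₁a])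
        (by rw [map_mul, map_one, p2P, p2Pi, ← map_mul, hPi1, map_one])
    · exact matrix_ext_of_proj D _ _
        (by rw [map_mul, map_one, p1P, p1Pi, hR₁b])
        (by rw [map_mul, map_one, p2P, p2Pi, ← map_mul, hPi2, map_one])
    · exact matrix_ext_of_proj D _ _
        (by rw [map_mul, map_one, p1Q, p1Qi, hS₁a])
        (by rw [map_mul, map_one, p2Q, p2Qi, ← map_mul, hQi1, map_one])
    · exact matrix_ext_of_proj D _ _
        (by rw [map_mul, map_one, p1Q, p1Qi, hS₁b])
        (by rw [map_mul, map_one, p2Q, p2Qi, ← map_mul, hQi2, map_one])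
    · refine matrix_ext_of_proj D _ _ ?_ ?_
      · rw [map_mul, map_mul, p1P, p1Q, ← hN₁, hd₁,
          RingHom.mapMatrix_apply, Matrix.diagonal_map (map_zero _)]
        rfl
      · rw [map_mul, map_mul, p2P, p2Q, ← hN₂d, hZ,
          RingHom.mapMatrix_apply, Matrix.diagonal_map (map_zero _)]
        rfl
end

section
/- Let A and B be integral domains, J an ideal of B, and f : A → B an injective ring homomorphism. Then the following are equivalent: (1) A ⋈^f J is an Hermite ring; (2) A ⋈^f J is a Bézout ring; (3) either J = B and A and B are Bézout rings, or J ≠ B, f(A) ∩ J = 0 and f(A)+J is a Bézout ring. -/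
section Aux

variable {R S : Type*} [CommRing R] [CommRing S]

lemma isHermiteRing_iff' :
    IsHermiteRing R ↔ ∀ a b : R, ∃ a₁ b₁ d u v : R,
      a = a₁ * d ∧ b = b₁ * d ∧ u * a₁ + v * b₁ = 1 := by
  unfold IsHermiteRing
  refine forall₂_congr fun a b => ⟨?_, ?_⟩
  · rintro ⟨a₁, b₁, d, h1, h2, h3⟩
    have h1' : (1 : R) ∈ Ideal.span {a₁, b₁} := h3 ▸ Submodule.mem_top
    obtain ⟨u, v, huv⟩ := Ideal.mem_span_pair.mp h1'
    exact ⟨a₁, b₁, d, u, v, h1, h2, huv⟩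
  · rintro ⟨a₁, b₁, d, u, v, h1, h2, h3⟩
    exact ⟨a₁, b₁, d, h1, h2, by
      rw [Ideal.eq_top_iff_one]; exact Ideal.mem_span_pair.mpr ⟨u, v, h3⟩⟩

lemma IsHermiteRing.isBezout' (h : IsHermiteRing R) : IsBezout R := by
  rw [IsBezout.iff_span_pair_isPrincipal]
  intro x y
  obtain ⟨a₁, b₁, d, u, v, h1, h2, h3⟩ := isHermiteRing_iff'.mp h x y
  refine ⟨d, ?_⟩
  rw [Ideal.submodule_span_eq]
  apply le_antisymm
  · rw [Ideal.span_le]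
    rintro z hz
    simp only [Set.mem_insert_iff, Set.mem_singleton_iff] at hz
    rcases hz with rfl | rfl
    · exact Ideal.mem_span_singleton.mpr ⟨a₁, by rw [h1, mul_comm]⟩
    · exact Ideal.mem_span_singleton.mpr ⟨b₁, by rw [h2, mul_comm]⟩
  · rw [Ideal.span_singleton_le_iff_mem]
    exact Ideal.mem_span_pair.mpr ⟨u, v, by rw [h1, h2]; linear_combination d * h3⟩

lemma IsBezout.isHermiteRing' [IsDomain R] (h : IsBezout R) : IsHermiteRing R := by
  intro a b
  have hp : (Ideal.span {a, b} : Ideal R).IsPrincipal := by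
    rw [IsBezout.iff_span_pair_isPrincipal] at h; exact h a b
  obtain ⟨⟨d, hd⟩⟩ := hp
  rw [Ideal.submodule_span_eq] at hd
  have ha : a ∈ Ideal.span {d} := hd ▸ Ideal.subset_span (by simp)
  have hb : b ∈ Ideal.span {d} := hd ▸ Ideal.subset_span (by simp)
  obtain ⟨a₁, ha₁⟩ := Ideal.mem_span_singleton'.mp ha
  obtain ⟨b₁, hb₁⟩ := Ideal.mem_span_singleton'.mp hb
  rcases eq_or_ne d 0 with rfl | hd0
  · refine ⟨1, 1, 0, by rw [← ha₁]; ring, by rw [← hb₁]; ring, ?_⟩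
    rw [Ideal.eq_top_iff_one]; exact Ideal.subset_span (by simp)
  · have hdm : d ∈ Ideal.span ({a, b} : Set R) := hd ▸ Ideal.mem_span_singleton_self d
    obtain ⟨u, v, huv⟩ := Ideal.mem_span_pair.mp hdm
    refine ⟨a₁, b₁, d, ha₁.symm, hb₁.symm, ?_⟩
    rw [Ideal.eq_top_iff_one]
    refine Ideal.mem_span_pair.mpr ⟨u, v, mul_right_cancel₀ hd0 ?_⟩
    rw [one_mul]
    calc (u * a₁ + v * b₁) * d = u * (a₁ * d) + v * (b₁ * d) := by ring
    _ = u * a + v * b := by rw [ha₁, hb₁]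
    _ = d := huv

lemma isHermiteRing_of_equiv (e : R ≃+* S) (h : IsHermiteRing R) : IsHermiteRing S := by
  rw [isHermiteRing_iff'] at h ⊢
  intro a b
  obtain ⟨a₁, b₁, d, u, v, h1, h2, h3⟩ := h (e.symm a) (e.symm b)
  refine ⟨e a₁, e b₁, e d, e u, e v, ?_, ?_, ?_⟩
  · rw [← map_mul, ← h1, e.apply_symm_apply]
  · rw [← map_mul, ← h2, e.apply_symm_apply]
  · rw [← map_mul, ← map_mul, ← map_add, h3, map_one]

lemma isHermiteRing_prod {A B : Type*} [CommRing A] [CommRing B]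
    (hA : IsHermiteRing A) (hB : IsHermiteRing B) : IsHermiteRing (A × B) := by
  rw [isHermiteRing_iff'] at hA hB ⊢
  intro p q
  obtain ⟨a₁, b₁, d, u, v, h1, h2, h3⟩ := hA p.1 q.1
  obtain ⟨a₂, b₂, d', u', v', h1', h2', h3'⟩ := hB p.2 q.2
  exact ⟨(a₁, a₂), (b₁, b₂), (d, d'), (u, u'), (v, v'),
    Prod.ext h1 h1', Prod.ext h2 h2', Prod.ext h3 h3'⟩

end Aux

section Iso

variable {A B : Type*} [CommRing A] [CommRing B]

lemma mem_amalgamation {f : A →+* B} {J : Ideal B} {p : A × B} :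
    p ∈ amalgamation f J ↔ p.2 - f p.1 ∈ J := Iff.rfl

lemma mem_rangeAddIdeal {f : A →+* B} {J : Ideal B} {b : B} :
    b ∈ rangeAddIdeal f J ↔ ∃ a, b - f a ∈ J := Iff.rfl

/-- When `J = ⊤`, the amalgamation is all of `A × B`. -/
noncomputable def amalgEquivProd (f : A →+* B) (J : Ideal B) (hJ : J = ⊤) :
    amalgamation f J ≃+* A × B :=
  RingEquiv.ofBijective (amalgamation f J).subtype
    ⟨Subtype.val_injective, fun p => ⟨⟨p, by simp [mem_amalgamation, hJ]⟩, rfl⟩⟩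

/-- When `f(A) ∩ J = 0`, the second projection is an isomorphism onto `f(A)+J`. -/
noncomputable def amalgEquivRange (f : A →+* B) (hf : Function.Injective f) (J : Ideal B)
    (h0 : ∀ a : A, f a ∈ J → f a = 0) :
    amalgamation f J ≃+* rangeAddIdeal f J :=
  RingEquiv.ofBijective
    ({ toFun := fun p => ⟨p.val.2, p.val.1, p.prop⟩
       map_one' := rfl
       map_mul' := fun p q => rfl
       map_zero' := rfl
       map_add' := fun p q => rfl } : amalgamation f J →+* rangeAddIdeal f J)
    ⟨by
      rintro ⟨⟨a, b⟩, hp⟩ ⟨⟨a', b'⟩, hq⟩ h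
      have hb : b = b' := congrArg Subtype.val h
      have hmem : f (a' - a) ∈ J := by
        have h1 : b - f a ∈ J := hp
        have h2 : b' - f a' ∈ J := hq
        have : (b - f a) - (b' - f a') ∈ J := J.sub_mem h1 h2
        rw [map_sub]
        have heq : f a' - f a = (b - f a) - (b' - f a') := by rw [hb]; ring
        rw [heq]; exact this
      have hz : f (a' - a) = 0 := h0 _ hmem
      have ha : a' = a := by
        apply hf
        rw [map_sub] at hz
        exact sub_eq_zero.mp hz
      exact Subtype.ext (Prod.ext ha.symm hb),
     by rintro ⟨b, a, h⟩; exact ⟨⟨(a, b), h⟩, rfl⟩⟩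

end Iso

section Key

variable {A B : Type*} [CommRing A] [IsDomain A] [CommRing B] [IsDomain B]

/-- If the amalgamation is Bezout and `J ≠ ⊤`, then `f(A) ∩ J = 0`. -/
lemma key_lemma (f : A →+* B) (J : Ideal B) (hB : IsBezout (amalgamation f J))
    (hJ : J ≠ ⊤) : ∀ a : A, f a ∈ J → f a = 0 := by
  intro a haJ
  by_contra hfa0
  have ha0 : a ≠ 0 := fun h => hfa0 (by simp [h])
  have hp : ((a, 0) : A × B) ∈ amalgamation f J := by
    rw [mem_amalgamation]; simpa using J.neg_mem haJ
  have hq : ((0, f a) : A × B) ∈ amalgamation f J := by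
    rw [mem_amalgamation]; simpa using haJ
  set p : amalgamation f J := ⟨(a, 0), hp⟩ with hpdef
  set q : amalgamation f J := ⟨(0, f a), hq⟩ with hqdef
  have hprin := (IsBezout.iff_span_pair_isPrincipal.mp hB) p q
  obtain ⟨⟨d, hd⟩⟩ := hprin
  rw [Ideal.submodule_span_eq] at hd
  have hpd : p ∈ Ideal.span {d} := hd ▸ Ideal.subset_span (by simp)
  have hqd : q ∈ Ideal.span {d} := hd ▸ Ideal.subset_span (by simp)
  have hdpq : d ∈ Ideal.span ({p, q} : Set (amalgamation f J)) :=
    hd ▸ Ideal.mem_span_singleton_self d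
  obtain ⟨x, hx⟩ := Ideal.mem_span_singleton'.mp hpd
  obtain ⟨u, hu⟩ := Ideal.mem_span_singleton'.mp hqd
  obtain ⟨α, β, hαβ⟩ := Ideal.mem_span_pair.mp hdpq
  -- component equations
  have hx1 : x.val.1 * d.val.1 = a := congrArg (fun z : amalgamation f J => z.val.1) hx
  have hx2 : x.val.2 * d.val.2 = 0 := congrArg (fun z : amalgamation f J => z.val.2) hx
  have hu2 : u.val.2 * d.val.2 = f a := congrArg (fun z : amalgamation f J => z.val.2) hu
  have hαβ1 : α.val.1 * a + β.val.1 * 0 = d.val.1 :=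
    congrArg (fun z : amalgamation f J => z.val.1) hαβ
  have hαβ2 : α.val.2 * 0 + β.val.2 * f a = d.val.2 :=
    congrArg (fun z : amalgamation f J => z.val.2) hαβ
  have hd1 : d.val.1 = α.val.1 * a := by linear_combination -hαβ1
  have hd2 : d.val.2 = β.val.2 * f a := by linear_combination -hαβ2
  -- x₁ * α₁ = 1
  have hxα : x.val.1 * α.val.1 = 1 := by
    apply mul_right_cancel₀ ha0
    rw [one_mul]
    calc x.val.1 * α.val.1 * a = x.val.1 * (α.val.1 * a) := by ring
    _ = x.val.1 * d.val.1 := by rw [← hd1]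
    _ = a := hx1
  -- u₂ * β₂ = 1, hence d₂ ≠ 0
  have huβ : u.val.2 * β.val.2 = 1 := by
    apply mul_right_cancel₀ hfa0
    rw [one_mul]
    calc u.val.2 * β.val.2 * f a = u.val.2 * (β.val.2 * f a) := by ring
    _ = u.val.2 * d.val.2 := by rw [← hd2]
    _ = f a := hu2
  have hβ0 : β.val.2 ≠ 0 := by
    intro h; rw [h, mul_zero] at huβ; exact zero_ne_one huβ
  have hd20 : d.val.2 ≠ 0 := by rw [hd2]; exact mul_ne_zero hβ0 hfa0
  -- x₂ = 0
  have hx20 : x.val.2 = 0 := by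
    rcases mul_eq_zero.mp hx2 with h | h
    · exact h
    · exact absurd h hd20
  -- f x₁ ∈ J
  have hfx1 : f x.val.1 ∈ J := by
    have hxm : x.val.2 - f x.val.1 ∈ J := x.prop
    rw [hx20, zero_sub] at hxm
    simpa using J.neg_mem hxm
  -- 1 ∈ J
  apply hJ
  rw [Ideal.eq_top_iff_one]
  have : f x.val.1 * f α.val.1 ∈ J := J.mul_mem_right _ hfx1
  rwa [← map_mul, hxα, map_one] at this

end Key

section Main

variable {A B : Type*} [CommRing A] [IsDomain A] [CommRing B] [IsDomain B]

lemma bezout_of_equiv {R S : Type*} [CommRing R] [CommRing S] (e : R ≃+* S)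
    (h : IsBezout R) : IsBezout S := by
  haveI := h
  exact Function.Surjective.isBezout e.toRingHom e.surjective

lemma forward_dir (f : A →+* B) (hf : Function.Injective f) (J : Ideal B)
    (hB : IsBezout (amalgamation f J)) :
    (J = ⊤ ∧ IsBezout A ∧ IsBezout B) ∨
      (J ≠ ⊤ ∧ (∀ a : A, f a ∈ J → f a = 0) ∧ IsBezout (rangeAddIdeal f J)) := by
  by_cases hJ : J = ⊤
  · left
    refine ⟨hJ, ?_, ?_⟩
    all_goals
      haveI : IsBezout (A × B) := bezout_of_equiv (amalgEquivProd f J hJ) hB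
    · exact Function.Surjective.isBezout (RingHom.fst A B) Prod.fst_surjective
    · exact Function.Surjective.isBezout (RingHom.snd A B) Prod.snd_surjective
  · right
    have h0 := key_lemma f J hB hJ
    exact ⟨hJ, h0, bezout_of_equiv (amalgEquivRange f hf J h0) hB⟩

lemma backward_dir (f : A →+* B) (hf : Function.Injective f) (J : Ideal B)
    (h : (J = ⊤ ∧ IsBezout A ∧ IsBezout B) ∨
      (J ≠ ⊤ ∧ (∀ a : A, f a ∈ J → f a = 0) ∧ IsBezout (rangeAddIdeal f J))) :
    IsHermiteRing (amalgamation f J) := by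
  rcases h with ⟨hJ, hA, hB⟩ | ⟨hJ, h0, hB⟩
  · exact isHermiteRing_of_equiv (amalgEquivProd f J hJ).symm
      (isHermiteRing_prod hA.isHermiteRing' hB.isHermiteRing')
  · exact isHermiteRing_of_equiv (amalgEquivRange f hf J h0).symm hB.isHermiteRing'

end Main

theorem stmt16 {A B : Type*} [CommRing A] [IsDomain A] [CommRing B] [IsDomain B]
    (f : A →+* B) (hf : Function.Injective f) (J : Ideal B) :
    (IsHermiteRing (amalgamation f J) ↔ IsBezout (amalgamation f J)) ∧
    (IsBezout (amalgamation f J) ↔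
      (J = ⊤ ∧ IsBezout A ∧ IsBezout B) ∨
      (J ≠ ⊤ ∧ (∀ a : A, f a ∈ J → f a = 0) ∧ IsBezout (rangeAddIdeal f J))) := by
  constructor
  · exact ⟨fun h => h.isBezout', fun h => backward_dir f hf J (forward_dir f hf J h)⟩
  · exact ⟨forward_dir f hf J, fun h => (backward_dir f hf J h).isBezout'⟩
end

section
/- Let A be a Bézout domain with quotient field K and let i : A ↪ K[[x]] be the inclusion. Then A ⋈^i (xK[[x]]) is an Hermite ring; equivalently, the subring A + xK[[x]] of K[[x]] is a Bézout domain. -/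
theorem stmt17 {A : Type*} [CommRing A] [IsDomain A] [IsBezout A]
    (S : Subring (PowerSeries (FractionRing A)))
    (hS : ∀ g : PowerSeries (FractionRing A),
      g ∈ S ↔ PowerSeries.constantCoeff g ∈ (algebraMap A (FractionRing A)).range) :
    IsHermiteRing S ∧ IsBezout S := by
  open PowerSeries in
  classical
  set K := FractionRing A
  set i : A →+* K⟦X⟧ := (PowerSeries.C (R := K)).comp (algebraMap A K) with hi
  have hinj : Function.Injective (algebraMap A K) := IsFractionRing.injective A K
  have hiS : ∀ a : A, i a ∈ S := by
    intro a
    rw [hS]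
    exact ⟨a, by simp [hi]; rfl⟩
  have main : ∀ f g : S, (f : K⟦X⟧) ∣ (g : K⟦X⟧) →
      ∃ d a₁ b₁ α β : S, f = a₁ * d ∧ g = b₁ * d ∧ α * a₁ + β * b₁ = 1 := by
    rintro f g ⟨t, ht⟩
    obtain ⟨r, q, hqmem, hc⟩ := IsFractionRing.div_surjective (A := A)
      (constantCoeff t)
    have hq0 : q ≠ 0 := nonZeroDivisors.ne_zero hqmem
    have hqK : algebraMap A K q ≠ 0 := fun h => hq0 (hinj (by simpa using h))
    set s : A := IsBezout.gcd q r with hsdef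
    obtain ⟨q₁, hq₁⟩ := IsBezout.gcd_dvd_left q r
    obtain ⟨r₁, hr₁⟩ := IsBezout.gcd_dvd_right q r
    obtain ⟨α, β, hαβ⟩ := IsBezout.gcd_eq_sum q r
    rw [← hsdef] at hq₁ hr₁ hαβ
    have hs0 : s ≠ 0 := fun h => hq0 (by rw [hq₁, h, zero_mul])
    have hsK : algebraMap A K s ≠ 0 := fun h => hs0 (hinj (by simpa using h))
    have hone : α * q₁ + β * r₁ = 1 := by
      have h2 : α * (s * q₁) + β * (s * r₁) = s := by rw [← hq₁, ← hr₁]; exact hαβ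
      have h3 : (α * q₁ + β * r₁) * s = 1 * s := by linear_combination h2
      exact mul_right_cancel₀ hs0 h3
    -- the unit w
    set w : K⟦X⟧ := i α + i β * t with hw
    have hconstw : constantCoeff w = algebraMap A K s / algebraMap A K q := by
      have : algebraMap A K α + algebraMap A K β * (algebraMap A K r / algebraMap A K q)
          = algebraMap A K s / algebraMap A K q := by
        rw [eq_div_iff hqK, add_mul, mul_assoc, div_mul_cancel₀ _ hqK, ← map_mul, ← map_mul,
          ← map_add, hαβ]
      have hc' : constantCoeff t = algebraMap A K r / algebraMap A K q := hc.symm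
      simpa [hw, hi, hc'] using this
    have hw0 : constantCoeff w ≠ 0 := by
      rw [hconstw]
      exact div_ne_zero hsK hqK
    have hwinv : w⁻¹ * w = 1 := PowerSeries.inv_mul_cancel w hw0
    have hconstwinv : constantCoeff w⁻¹ = algebraMap A K q / algebraMap A K s := by
      rw [PowerSeries.constantCoeff_inv, hconstw, inv_div]
    -- membership facts
    have hwinvS : w⁻¹ ∈ S := by
      rw [hS, hconstwinv]
      refine ⟨q₁, ?_⟩
      rw [hq₁]
      simp only [map_mul]; exact (mul_div_cancel_left₀ _ hsK).symm
    have hwinvtS : w⁻¹ * t ∈ S := by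
      rw [hS, map_mul, hconstwinv, ← hc]
      refine ⟨r₁, ?_⟩
      rw [hr₁]
      have e : algebraMap A K q / algebraMap A K s * (algebraMap A K s * algebraMap A K r₁ /
          algebraMap A K q) = algebraMap A K r₁ := by
        rw [div_mul_div_comm, mul_comm (algebraMap A K q), mul_div_mul_right _ _ hqK,
          mul_div_cancel_left₀ _ hsK]
      rw [map_mul]; exact e.symm
    -- the generator d = f * w ∈ S
    have hdS : (f : K⟦X⟧) * w ∈ S := by
      have : (f : K⟦X⟧) * w = i α * (f : K⟦X⟧) + i β * (g : K⟦X⟧) := by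
        rw [hw, ht]; ring
      rw [this]
      exact S.add_mem (S.mul_mem (hiS α) f.2) (S.mul_mem (hiS β) g.2)
    refine ⟨⟨(f : K⟦X⟧) * w, hdS⟩, ⟨w⁻¹, hwinvS⟩, ⟨w⁻¹ * t, hwinvtS⟩,
      ⟨i α, hiS α⟩, ⟨i β, hiS β⟩, ?_, ?_, ?_⟩
    · ext
      push_cast
      rw [show w⁻¹ * ((f : K⟦X⟧) * w) = (f : K⟦X⟧) * (w⁻¹ * w) by ring, hwinv, mul_one]
    · ext
      push_cast
      rw [ht, show w⁻¹ * t * ((f : K⟦X⟧) * w) = (f : K⟦X⟧) * t * (w⁻¹ * w) by ring,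
        hwinv, mul_one]
    · ext
      push_cast
      rw [show i α * w⁻¹ + i β * (w⁻¹ * t) = w⁻¹ * (i α + i β * t) by ring, ← hw, hwinv]
  have core : ∀ f g : S,
      ∃ d a₁ b₁ α β : S, f = a₁ * d ∧ g = b₁ * d ∧ α * a₁ + β * b₁ = 1 := by
    intro f g
    rcases ValuationRing.dvd_total (f : K⟦X⟧) (g : K⟦X⟧) with hd | hd
    · exact main f g hd
    · obtain ⟨d, a₁, b₁, α, β, h1, h2, h3⟩ := main g f hd
      exact ⟨d, b₁, a₁, β, α, h2, h1, by rw [← h3]; ring⟩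
  constructor
  · intro a b
    obtain ⟨d, a₁, b₁, α, β, h1, h2, h3⟩ := core a b
    exact ⟨a₁, b₁, d, h1, h2,
      Ideal.eq_top_iff_one _ |>.mpr (Ideal.mem_span_pair.mpr ⟨α, β, h3⟩)⟩
  · rw [IsBezout.iff_span_pair_isPrincipal]
    intro x y
    obtain ⟨d, a₁, b₁, α, β, h1, h2, h3⟩ := core x y
    refine ⟨⟨d, le_antisymm ?_ ?_⟩⟩
    · rw [Ideal.span_le]
      rintro z hz
      rcases hz with rfl | hz
      · exact Ideal.mem_span_singleton.mpr ⟨a₁, by rw [h1, mul_comm]⟩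
      · rw [Set.mem_singleton_iff] at hz
        subst hz
        exact Ideal.mem_span_singleton.mpr ⟨b₁, by rw [h2, mul_comm]⟩
    · refine Submodule.span_le.mpr ?_
      rw [Set.singleton_subset_iff]
      refine Ideal.mem_span_pair.mpr ⟨α, β, ?_⟩
      rw [h1, h2, show α * (a₁ * d) + β * (b₁ * d) = (α * a₁ + β * b₁) * d by ring, h3, one_mul]
end

section
/- Let R be a Bézout domain and R′ a ring with R ⊆ R′ ⊆ qf(R), where qf(R) is the quotient field of R. Then R′ is a Bézout domain. -/
theorem stmt18 {R : Type*} [CommRing R] [IsDomain R] [IsBezout R]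
    (R' : Subring (FractionRing R))
    (h : (algebraMap R (FractionRing R)).range ≤ R') :
    IsBezout R' := by
  classical
  set K := FractionRing R
  let f : R →+* R' := (algebraMap R K).codRestrict R' (fun r => h ⟨r, rfl⟩)
  have hf : ∀ r : R, ((f r : R') : K) = algebraMap R K r := fun r => rfl
  rw [IsBezout.iff_span_pair_isPrincipal]
  intro x y
  obtain ⟨⟨a₀, s₀⟩, hx₀⟩ := IsLocalization.mk'_surjective (nonZeroDivisors R) (x : K)
  obtain ⟨⟨b₀, s₁⟩, hy₀⟩ := IsLocalization.mk'_surjective (nonZeroDivisors R) (y : K)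
  set a : R := a₀ * s₁ with ha_def
  set b : R := b₀ * s₀ with hb_def
  set s : R := (s₀ : R) * s₁ with hs_def
  have hs' : algebraMap R K s ≠ 0 :=
    IsFractionRing.to_map_ne_zero_of_mem_nonZeroDivisors (mul_mem s₀.2 s₁.2)
  have hx : (x : K) * algebraMap R K s = algebraMap R K a := by
    rw [← hx₀, hs_def, map_mul, ← mul_assoc, IsLocalization.mk'_spec, ← map_mul, ← ha_def]
  have hy : (y : K) * algebraMap R K s = algebraMap R K b := by
    rw [← hy₀, hs_def, map_mul, mul_comm ((algebraMap R K) (s₀ : R)), ← mul_assoc,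
      IsLocalization.mk'_spec, ← map_mul, ← hb_def]
  obtain ⟨u, v, hd⟩ := IsBezout.gcd_eq_sum a b
  obtain ⟨c, hc⟩ := IsBezout.gcd_dvd_left a b
  obtain ⟨e, he⟩ := IsBezout.gcd_dvd_right a b
  set g : R' := f u * x + f v * y with hg
  have hgK : (g : K) * algebraMap R K s = algebraMap R K (IsBezout.gcd a b) := by
    push_cast [hg]
    rw [hf, hf, add_mul, mul_assoc, mul_assoc, hx, hy, ← map_mul, ← map_mul, ← map_add, hd]
  have hxg : x = f c * g := by
    apply Subtype.ext
    apply mul_right_cancel₀ hs'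
    push_cast
    rw [hf, hx, mul_assoc, hgK, ← map_mul]
    exact congrArg _ (by rw [mul_comm, ← hc])
  have hyg : y = f e * g := by
    apply Subtype.ext
    apply mul_right_cancel₀ hs'
    push_cast
    rw [hf, hy, mul_assoc, hgK, ← map_mul]
    exact congrArg _ (by rw [mul_comm, ← he])
  refine ⟨⟨g, le_antisymm ?_ ?_⟩⟩
  · rw [Ideal.span_le]
    rintro z (rfl | rfl)
    · exact Ideal.mem_span_singleton.2 ⟨f c, by rw [hxg, mul_comm]⟩
    · simp only [Set.mem_singleton_iff] at *
      exact Ideal.mem_span_singleton.2 ⟨f e, by rw [hyg, mul_comm]⟩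
  · show Ideal.span {g} ≤ Ideal.span {x, y}
    rw [Ideal.span_le, Set.singleton_subset_iff]
    exact Ideal.mem_span_pair.2 ⟨f u, f v, rfl⟩
end
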